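/- The homeomorphic embedding relation on finite rooted plane trees whose vertices are labelled by a well-quasi-ordered alphabet is a well-quasi-order. (Kruskal's tree theorem for labelled plane trees.) -/

import Mathlib

/-- A finite rooted plane tree with vertex labels in `A`: a label at the root and an
ordered list of child subtrees (the list order records the plane embedding). -/
inductive PTree (A : Type) : Type
  | node : A → List (PTree A) → PTree A

mutual
  /-- Homeomorphic embedding of labelled plane trees: `T₁` embeds into `T₂` if it embeds
  into one of the subtrees of `T₂` (deleting a root / contracting paths), or if the root
  label of `T₁` is `≤` that of `T₂` and the list of children of `T₁` embeds, preserving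
  the plane order, into the list of children of `T₂` (deleting leaves, reducing labels). -/
  inductive TreeEmb {A : Type} (le : A → A → Prop) : PTree A → PTree A → Prop
    | subtree {t : PTree A} {a : A} {us : List (PTree A)} (u : PTree A) :
        u ∈ us → TreeEmb le t u → TreeEmb le t (.node a us)
    | node {a b : A} {ts us : List (PTree A)} :
        le a b → ListEmb le ts us → TreeEmb le (.node a ts) (.node b us)

  /-- Order-preserving embedding of a list of trees into another (Higman-style). -/
  inductive ListEmb {A : Type} (le : A → A → Prop) :
      List (PTree A) → List (PTree A) → Prop
    | nil {us : List (PTree A)} : ListEmb le [] us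
    | cons {t u : PTree A} {ts us : List (PTree A)} :
        TreeEmb le t u → ListEmb le ts us → ListEmb le (t :: ts) (u :: us)
    | cons_right {u : PTree A} {ts us : List (PTree A)} :
        ListEmb le ts us → ListEmb le ts (u :: us)
end

def IsWQO {X : Type*} (r : X → X → Prop) : Prop :=
  ∀ f : ℕ → X, ∃ i j : ℕ, i < j ∧ r (f i) (f j)

namespace Kruskal

variable {A : Type}

def psize : PTree A → ℕ
  | .node _ ts => 1 + (ts.attach.map fun t => psize t.1).sum
decreasing_by
  simp_wf
  have := List.sizeOf_lt_of_mem t.2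
  omega

lemma psize_node (a : A) (ts : List (PTree A)) :
    psize (PTree.node a ts) = 1 + (ts.map psize).sum := by
  simp only [psize]
  rw [List.attach_map_val (l := ts) (f := psize)]

lemma psize_pos (t : PTree A) : 0 < psize t := by
  cases t with | node a ts => rw [psize_node]; omega

lemma psize_lt_of_mem {t : PTree A} {a : A} {ts : List (PTree A)} (h : t ∈ ts) :
    psize t < psize (PTree.node a ts) := by
  have : psize t ≤ (ts.map psize).sum :=
    List.single_le_sum (fun x _ => Nat.zero_le x) _ (List.mem_map_of_mem (f := psize) h)
  rw [psize_node]; omega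


def lsize (ts : List (PTree A)) : ℕ := (ts.map psize).sum

lemma lsize_cons (t : PTree A) (ts : List (PTree A)) :
    lsize (t :: ts) = psize t + lsize ts := by simp [lsize]

lemma psize_node_lsize (a : A) (ts : List (PTree A)) :
    psize (PTree.node a ts) = 1 + lsize ts := psize_node a ts

lemma psize_le_lsize_of_mem {t : PTree A} {ts : List (PTree A)} (h : t ∈ ts) :
    psize t ≤ lsize ts :=
  List.single_le_sum (fun x _ => Nat.zero_le x) _ (List.mem_map_of_mem (f := psize) h)

variable {le : A → A → Prop}

lemma listEmb_refl_of (l : List (PTree A)) (h : ∀ t ∈ l, TreeEmb le t t) :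
    ListEmb le l l := by
  induction l with
  | nil => exact ListEmb.nil
  | cons t ts ih =>
      exact ListEmb.cons (h t (List.mem_cons_self (a := t) (l := ts)))
        (ih fun x hx => h x (List.mem_cons_of_mem _ hx))

lemma treeEmb_refl (hrefl : ∀ a, le a a) : ∀ t : PTree A, TreeEmb le t t := by
  have main : ∀ n (t : PTree A), psize t ≤ n → TreeEmb le t t := by
    intro n
    induction n with
    | zero => intro t h; have := psize_pos t; omega
    | succ n ih =>
        intro t h
        cases t with
        | node a ts =>
            refine TreeEmb.node (hrefl a) (listEmb_refl_of ts fun x hx => ?_)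
            have h1 := psize_lt_of_mem (a := a) hx
            exact ih x (by omega)
  exact fun t => main (psize t) t le_rfl

lemma exists_mem_of_listEmb {t : PTree A} :
    ∀ {us ts : List (PTree A)}, ListEmb le ts us → t ∈ ts →
      ∃ u ∈ us, TreeEmb le t u := by
  intro us
  induction us with
  | nil =>
      intro ts h hm
      cases h; simp at hm
  | cons u us' ih =>
      intro ts h hm
      cases h with
      | nil => simp at hm
      | cons htu h' =>
          rcases List.mem_cons.1 hm with rfl | hm'
          · exact ⟨u, List.mem_cons_self, htu⟩
          · obtain ⟨u', hu', he⟩ := ih h' hm'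
            exact ⟨u', List.mem_cons_of_mem _ hu', he⟩
      | cons_right h' =>
          obtain ⟨u', hu', he⟩ := ih h' hm
          exact ⟨u', List.mem_cons_of_mem _ hu', he⟩

lemma listEmb_trans_aux {k : ℕ}
    (T : ∀ t u v : PTree A, psize t + psize u + psize v ≤ k →
      TreeEmb le t u → TreeEmb le u v → TreeEmb le t v) :
    ∀ {vs us ts : List (PTree A)}, ListEmb le us vs → ListEmb le ts us →
      lsize ts + lsize us + lsize vs ≤ k → ListEmb le ts vs := by
  intro vs
  induction vs with
  | nil =>
      intro us ts h2 h1 _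
      cases h2; cases h1; exact ListEmb.nil
  | cons v vs' ih =>
      intro us ts h2 h1 hk
      cases h2 with
      | nil => cases h1; exact ListEmb.nil
      | cons huv h2' =>
          cases h1 with
          | nil => exact ListEmb.nil
          | cons htu h1' =>
              refine ListEmb.cons (T _ _ _ ?_ htu huv) (ih h2' h1' ?_) <;>
                (simp only [lsize_cons] at hk ⊢; have := psize_pos v; omega)
          | cons_right h1' =>
              refine ListEmb.cons_right (ih h2' h1' ?_)
              simp only [lsize_cons] at hk ⊢; have := psize_pos v; omega
      | cons_right h2' =>
          refine ListEmb.cons_right (ih h2' h1 ?_)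
          simp only [lsize_cons] at hk ⊢; have := psize_pos v; omega

lemma treeEmb_trans (htrans : ∀ a b c, le a b → le b c → le a c) :
    ∀ t u v : PTree A, TreeEmb le t u → TreeEmb le u v → TreeEmb le t v := by
  have main : ∀ n, ∀ t u v : PTree A, psize t + psize u + psize v ≤ n →
      TreeEmb le t u → TreeEmb le u v → TreeEmb le t v := by
    intro n
    induction n with
    | zero => intro t u v h _ _; have := psize_pos t; omega
    | succ n ih =>
        intro t u v hs h1 h2
        cases h2 with
        | subtree v₀ hmem h2' =>
            have hlt := psize_le_lsize_of_mem hmem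
            rw [psize_node_lsize] at hs
            have hu := psize_pos u
            exact TreeEmb.subtree v₀ hmem (ih t u v₀ (by omega) h1 h2')
        | node hbc lemb2 =>
            cases h1 with
            | subtree u₀ hmem h1' =>
                obtain ⟨v₀, hv₀, h₀⟩ := exists_mem_of_listEmb lemb2 hmem
                have hlt := psize_le_lsize_of_mem hmem
                have hlt' := psize_le_lsize_of_mem hv₀
                simp only [psize_node_lsize] at hs
                exact TreeEmb.subtree v₀ hv₀ (ih t u₀ v₀ (by omega) h1' h₀)
            | node hab lemb1 =>
                refine TreeEmb.node (htrans _ _ _ hab hbc) ?_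
                refine listEmb_trans_aux (k := n) (fun t' u' v' hb ha hb' =>
                  ih t' u' v' hb ha hb') lemb2 lemb1 ?_
                simp only [psize_node_lsize] at hs
                omega
  exact fun t u v => main (psize t + psize u + psize v) t u v le_rfl

lemma listEmb_of_sublistForall₂ :
    ∀ {ts us : List (PTree A)}, List.SublistForall₂ (TreeEmb le) ts us →
      ListEmb le ts us := by
  intro ts us h
  induction h with
  | nil => exact ListEmb.nil
  | cons h1 _ ih => exact ListEmb.cons h1 ih
  | cons_right _ ih => exact ListEmb.cons_right ih


variable (le)

/-- `f` is a bad sequence: no `i < j` with `f i` embedding into `f j`. -/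
def Bad (f : ℕ → PTree A) : Prop := ∀ i j, i < j → ¬ TreeEmb le (f i) (f j)

/-- `l` is a prefix of some bad sequence. -/
def Ext (l : List (PTree A)) : Prop :=
  ∃ f : ℕ → PTree A, Bad le f ∧ ∀ i (h : i < l.length), f i = l[i]

lemma ext_snoc {l : List (PTree A)} (h : Ext le l) : ∃ t, Ext le (l ++ [t]) := by
  obtain ⟨f, hbad, hagr⟩ := h
  refine ⟨f l.length, f, hbad, ?_⟩
  intro i hi
  simp only [List.length_append, List.length_singleton] at hi
  rcases Nat.lt_or_ge i l.length with h' | h'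
  · rw [List.getElem_append_left h', hagr i h']
  · have hi' : i = l.length := by omega
    subst hi'
    simp


lemma exists_min_ext {l : List (PTree A)} (h : ∃ t, Ext le (l ++ [t])) :
    ∃ t, Ext le (l ++ [t]) ∧ ∀ t', Ext le (l ++ [t']) → psize t ≤ psize t' := by
  classical
  obtain ⟨t, ht⟩ := h
  have hP : ∃ s : ℕ, ∃ t, psize t = s ∧ Ext le (l ++ [t]) := ⟨psize t, t, rfl, ht⟩
  obtain ⟨t₀, hps, he⟩ := Nat.find_spec hP
  refine ⟨t₀, he, fun t' ht' => ?_⟩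
  have := Nat.find_min' hP ⟨t', rfl, ht'⟩
  omega

open Classical in
/-- The minimal bad sequence, built by recursion with minimal-size choices. -/
noncomputable def mbs (t0 : PTree A) : ℕ → PTree A
  | n =>
    let l := List.ofFn (fun i : Fin n => mbs t0 i.1)
    if h : ∃ t, Ext le (l ++ [t]) then (exists_min_ext le h).choose else t0
  termination_by n => n
  decreasing_by exact i.2

/-- Prefix of the minimal bad sequence as a list. -/
noncomputable def mbl (t0 : PTree A) (n : ℕ) : List (PTree A) :=
  List.ofFn (fun i : Fin n => mbs le t0 i.1)

open Classical in
lemma mbs_eq (t0 : PTree A) (n : ℕ) :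
    mbs le t0 n =
      if h : ∃ t, Ext le (mbl le t0 n ++ [t]) then (exists_min_ext le h).choose
      else t0 := by
  rw [mbs]
  rfl

lemma mbl_length (t0 : PTree A) (n : ℕ) : (mbl le t0 n).length = n := by
  simp [mbl]

lemma mbl_getElem (t0 : PTree A) (n i : ℕ) (h : i < (mbl le t0 n).length) :
    (mbl le t0 n)[i] = mbs le t0 i := by
  simp [mbl]

lemma mbl_succ (t0 : PTree A) (n : ℕ) :
    mbl le t0 (n + 1) = mbl le t0 n ++ [mbs le t0 n] := by
  simp only [mbl]
  rw [List.ofFn_succ']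
  simp [Fin.castSucc, Fin.last, List.concat_eq_append]

lemma mbs_spec (t0 : PTree A) (hne : ∃ f, Bad le f) (n : ℕ) :
    Ext le (mbl le t0 n ++ [mbs le t0 n]) ∧
      ∀ t', Ext le (mbl le t0 n ++ [t']) → psize (mbs le t0 n) ≤ psize t' := by
  induction n using Nat.strong_induction_on with
  | _ n ih =>
    have hext : Ext le (mbl le t0 n) := by
      cases n with
      | zero =>
          obtain ⟨f, hf⟩ := hne
          exact ⟨f, hf, by intro i hi; simp [mbl] at hi⟩
      | succ m =>
          rw [mbl_succ]
          exact (ih m (Nat.lt_succ_self m)).1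
    have hEx : ∃ t, Ext le (mbl le t0 n ++ [t]) := ext_snoc le hext
    rw [mbs_eq, dif_pos hEx]
    exact (exists_min_ext le hEx).choose_spec

lemma bad_mbs (t0 : PTree A) (hne : ∃ f, Bad le f) : Bad le (mbs le t0) := by
  intro i j hij hemb
  obtain ⟨f, hbad, hagr⟩ := (mbs_spec le t0 hne j).1
  have hfi : f i = mbs le t0 i := by
    have hi : i < (mbl le t0 j ++ [mbs le t0 j]).length := by
      simp [mbl_length]; omega
    rw [hagr i hi, List.getElem_append_left (by simp [mbl_length]; omega),
      mbl_getElem]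
  have hfj : f j = mbs le t0 j := by
    have hj : j < (mbl le t0 j ++ [mbs le t0 j]).length := by
      simp [mbl_length]
    rw [hagr j hj]
    simp [List.getElem_append_right, mbl_length]
  exact hbad i j hij (by rw [hfi, hfj]; exact hemb)


def root : PTree A → A | .node a _ => a

def children : PTree A → List (PTree A) | .node _ ts => ts

lemma node_root_children (t : PTree A) : t = PTree.node (root t) (children t) := by
  cases t; rfl

lemma pwo_children (t0 : PTree A) (hne : ∃ f, Bad le f) :
    {t : PTree A | ∃ n, t ∈ children (mbs le t0 n)}.PartiallyWellOrderedOn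
      (TreeEmb le) := by
  rw [Set.partiallyWellOrderedOn_iff_exists_lt]
  intro h hmem
  by_contra hcon
  push_neg at hcon
  have hbadh : Bad le h := fun i j hij => hcon i j hij
  choose nn hnn using hmem
  classical
  have hNex : ∃ m : ℕ, ∃ k, nn k = m := ⟨nn 0, 0, rfl⟩
  obtain ⟨k₀, hNk₀⟩ := Nat.find_spec hNex
  set N := Nat.find hNex with hN
  have hminN : ∀ k, N ≤ nn k := fun k => Nat.find_min' hNex ⟨k, rfl⟩
  set F : ℕ → PTree A := fun i => if i < N then mbs le t0 i else h (k₀ + (i - N))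
    with hF
  have hmem_emb : ∀ i k, i < N → ¬ TreeEmb le (mbs le t0 i) (h k) := by
    intro i k hi hemb
    have hsub : TreeEmb le (mbs le t0 i)
        (PTree.node (root (mbs le t0 (nn k))) (children (mbs le t0 (nn k)))) :=
      TreeEmb.subtree (h k) (hnn k) hemb
    rw [← node_root_children] at hsub
    exact bad_mbs le t0 hne i (nn k) (lt_of_lt_of_le hi (hminN k)) hsub
  have hbadF : Bad le F := by
    intro i j hij hemb
    by_cases hj : j < N
    · have hi : i < N := lt_trans hij hj
      simp only [hF, if_pos hi, if_pos hj] at hemb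
      exact bad_mbs le t0 hne i j hij hemb
    · by_cases hi : i < N
      · simp only [hF, if_pos hi, if_neg hj] at hemb
        exact hmem_emb i _ hi hemb
      · simp only [hF, if_neg hi, if_neg hj] at hemb
        exact hbadh _ _ (by omega) hemb
  have hExtF : Ext le (mbl le t0 N ++ [h k₀]) := by
    refine ⟨F, hbadF, ?_⟩
    intro i hi
    simp only [List.length_append, mbl_length, List.length_singleton] at hi
    rcases Nat.lt_or_ge i N with h' | h'
    · rw [List.getElem_append_left (by rw [mbl_length]; omega), mbl_getElem]
      simp [hF, if_pos h']
    · have hiN : i = N := by omega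
      subst hiN
      have hcat : (mbl le t0 N ++ [h k₀])[N]'(by simp [mbl_length]) = h k₀ := by
        have := List.getElem_concat_length (l := mbl le t0 N) (a := h k₀) (i := N)
          (mbl_length le t0 N).symm (by simp [mbl_length])
        simpa [List.concat_eq_append] using this
      rw [hcat]
      simp [hF]
  have hle := (mbs_spec le t0 hne N).2 (h k₀) hExtF
  have hmem₀ : h k₀ ∈ children (mbs le t0 N) := by
    rw [← hNk₀]; exact hnn k₀
  have hlt : psize (h k₀) < psize (mbs le t0 N) := by
    cases hEq : mbs le t0 N with
    | node a us =>
        rw [hEq] at hmem₀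
        exact psize_lt_of_mem (by simpa [children] using hmem₀)
  omega

end Kruskal

/-- Kruskal's tree theorem for labelled plane trees: if the alphabet `A` is
well-quasi-ordered by `le`, then homeomorphic embedding is a well-quasi-order on
finite rooted plane trees labelled by `A`. -/
theorem kruskal_plane_trees {A : Type} (le : A → A → Prop)
    (hrefl : ∀ a, le a a) (htrans : ∀ a b c, le a b → le b c → le a c)
    (hwqo : IsWQO le) :
    IsWQO (TreeEmb le) := by
  classical
  intro f
  by_contra hcon
  push_neg at hcon
  have hne : ∃ f, Kruskal.Bad le f := ⟨f, fun i j hij => hcon i j hij⟩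
  set t0 := f 0 with ht0
  set g := Kruskal.mbs le t0 with hg
  have hbadg := Kruskal.bad_mbs le t0 hne
  haveI : IsTrans A le := ⟨htrans⟩
  haveI : IsPreorder A le := { refl := hrefl, trans := htrans }
  haveI : IsPreorder (PTree A) (TreeEmb le) :=
    { refl := Kruskal.treeEmb_refl hrefl, trans := Kruskal.treeEmb_trans htrans }
  haveI : IsTrans (PTree A) (TreeEmb le) := ⟨Kruskal.treeEmb_trans htrans⟩
  have hA : (Set.univ : Set A).PartiallyWellOrderedOn le := Set.partiallyWellOrderedOn_iff_exists_lt.2 fun s _ => hwqo s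
  obtain ⟨φ, hφ⟩ := hA.exists_monotone_subseq (f := fun n => Kruskal.root (g n))
    (fun _ => Set.mem_univ _)
  have hS := Kruskal.pwo_children le t0 hne
  have hH := hS.partiallyWellOrderedOn_sublistForall₂ (r := TreeEmb le)
  obtain ⟨i, j, hij, hsub⟩ := hH.exists_lt (f := fun k => Kruskal.children (g (φ k)))
    (fun k x hx => ⟨φ k, hx⟩)
  have hemb : TreeEmb le (g (φ i)) (g (φ j)) := by
    rw [Kruskal.node_root_children (g (φ i)), Kruskal.node_root_children (g (φ j))]
    exact TreeEmb.node (hφ i j hij.le) (Kruskal.listEmb_of_sublistForall₂ hsub)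
  exact hbadg (φ i) (φ j) (φ.strictMono hij) hemb
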